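/- arXiv:1603.02004 — 5 statements merged into one kernel-verified Lean document; each statement's English description precedes it below -/
import Mathlib

section
/- For every u ∈ X, the square root of the predictive variance equals the worst-case interpolation error over the unit ball of the reproducing kernel Hilbert space: k_N(u,u)^{1/2} = sup_{g ∈ H_k, ‖g‖_{H_k} = 1} |g(u) − m_N^g(u)|. -/
open Matrix
open scoped RealInnerProductSpace

lemma sup_abs_inner_unit {H : Type*} [NormedAddCommGroup H] [InnerProductSpace ℝ H]
    (h : H) : (⨆ g : {g : H // ‖g‖ = 1}, |⟪g.1, h⟫|) = ‖h‖ := by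
  by_cases hz : h = 0
  · subst hz
    simp only [inner_zero_right, abs_zero, norm_zero]
    rcases isEmpty_or_nonempty {g : H // ‖g‖ = 1} with he | hn
    · exact Real.iSup_of_isEmpty _
    · exact ciSup_const
  · have hn : ‖h‖ ≠ 0 := norm_ne_zero_iff.mpr hz
    have hg₀ : ‖(‖h‖⁻¹ • h : H)‖ = 1 := by
      simp [norm_smul, inv_mul_cancel₀ hn]
    set g₀ : {g : H // ‖g‖ = 1} := ⟨‖h‖⁻¹ • h, hg₀⟩
    have hbdd : BddAbove (Set.range fun g : {g : H // ‖g‖ = 1} => |⟪g.1, h⟫|) := by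
      refine ⟨‖h‖, ?_⟩
      rintro x ⟨g, rfl⟩
      calc |⟪g.1, h⟫| ≤ ‖g.1‖ * ‖h‖ := abs_real_inner_le_norm _ _
        _ = ‖h‖ := by rw [g.2, one_mul]
    haveI : Nonempty {g : H // ‖g‖ = 1} := ⟨g₀⟩
    apply le_antisymm
    · refine ciSup_le fun g => ?_
      calc |⟪g.1, h⟫| ≤ ‖g.1‖ * ‖h‖ := abs_real_inner_le_norm _ _
        _ = ‖h‖ := by rw [g.2, one_mul]
    · have hval : |⟪g₀.1, h⟫| = ‖h‖ := by
        have : ⟪g₀.1, h⟫ = ‖h‖ := by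
          simp only [g₀, real_inner_smul_left, real_inner_self_eq_norm_mul_norm]
          field_simp
        rw [this, abs_of_nonneg (norm_nonneg _)]
      rw [← hval]
      exact le_ciSup hbdd g₀

/-- For every `u ∈ X`, the square root of the predictive variance equals the
worst-case interpolation error over the unit ball of the RKHS:
`k_N(u,u)^{1/2} = sup_{‖g‖_{H_k}=1} |g(u) − m_N^g(u)|`. -/
theorem predictive_stddev_eq_sup_unit_ball_interpolation_error
    {X : Type*} [Nonempty X] (k : X → X → ℝ)
    (hsym : ∀ u v : X, k u v = k v u)
    (hpd : ∀ (m : ℕ) (v : Fin m → X), Function.Injective v →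
      (Matrix.of fun i j => k (v i) (v j)).PosDef)
    {H : Type*} [NormedAddCommGroup H] [InnerProductSpace ℝ H] [CompleteSpace H]
    (ι : H →ₗ[ℝ] X → ℝ)
    (Ksec : X → H)
    (hKsec : ∀ u : X, ι (Ksec u) = fun v => k u v)
    (hrepro : ∀ (u : X) (g : H), ⟪g, Ksec u⟫ = ι g u)
    {N : ℕ} (U : Fin N → X) (hU : Function.Injective U)
    (K : Matrix (Fin N) (Fin N) ℝ) (hK : K = Matrix.of fun i j => k (U i) (U j))
    (mN : H → X → ℝ)
    (hmN : ∀ (g : H) (u : X), mN g u = (fun i => k u (U i)) ⬝ᵥ (K⁻¹ *ᵥ fun i => ι g (U i)))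
    (kN : X → ℝ)
    (hkN : ∀ u : X, kN u = k u u - (fun i => k u (U i)) ⬝ᵥ (K⁻¹ *ᵥ fun i => k u (U i)))
    (u : X) :
    Real.sqrt (kN u) = ⨆ g : {g : H // ‖g‖ = 1}, |ι g.1 u - mN g.1 u| := by
  have hKpd : K.PosDef := hK ▸ hpd N U hU
  have hdet : IsUnit K.det := isUnit_iff_ne_zero.mpr (ne_of_gt hKpd.det_pos)
  have hKsym : Kᵀ = K := by
    subst hK; ext i j; simp [Matrix.transpose_apply, hsym (U i) (U j)]
  have hKinv_sym : (K⁻¹)ᵀ = K⁻¹ := by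
    rw [Matrix.transpose_nonsing_inv, hKsym]
  set c : Fin N → ℝ := fun i => k u (U i) with hc
  set w : Fin N → ℝ := K⁻¹ *ᵥ c with hw
  -- key swap identity
  have hswap : ∀ y : Fin N → ℝ, c ⬝ᵥ (K⁻¹ *ᵥ y) = w ⬝ᵥ y := by
    intro y
    rw [Matrix.dotProduct_mulVec, hw, ← Matrix.mulVec_transpose, hKinv_sym]
  set h : H := Ksec u - ∑ i, w i • Ksec (U i) with hh
  -- evaluation of ι h
  have hiota : ∀ v : X, ι h v = k u v - ∑ i, w i * k (U i) v := by
    intro v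
    rw [hh, map_sub, map_sum]
    simp only [Pi.sub_apply, Finset.sum_apply, LinearMap.map_smul, Pi.smul_apply,
      smul_eq_mul, hKsec]
  have hinner : ∀ g : H, ⟪g, h⟫ = ι g u - mN g u := by
    intro g
    rw [hh, inner_sub_right, inner_sum]
    simp only [real_inner_smul_right, hrepro]
    rw [hmN, hswap]
    rfl
  have hKw : K *ᵥ w = c := by
    rw [hw, Matrix.mulVec_mulVec, Matrix.mul_nonsing_inv _ hdet, Matrix.one_mulVec]
  have hiU : ∀ j, ι h (U j) = 0 := by
    intro j
    rw [hiota]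
    have : ∑ i, w i * k (U i) (U j) = (K *ᵥ w) j := by
      simp only [hK, Matrix.mulVec, dotProduct, Matrix.of_apply]
      exact Finset.sum_congr rfl fun i _ => by rw [hsym (U i) (U j), mul_comm]
    rw [this, hKw]
    simp [hc]
  have hnormsq : ⟪h, h⟫ = kN u := by
    have h1 : ⟪h, h⟫ = ι h u - ∑ i, w i * ι h (U i) := by
      conv_lhs => rw [hh, inner_sub_right, inner_sum]
      simp only [real_inner_smul_right, hrepro]
      rfl
    rw [h1]
    simp only [hiU, mul_zero, Finset.sum_const_zero, sub_zero]
    rw [hiota, hkN, hswap]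
    congr 1
    rw [dotProduct]
    exact Finset.sum_congr rfl fun i _ => by rw [hsym (U i) u]
  have hfinal : kN u = ‖h‖ ^ 2 := by
    rw [← hnormsq, real_inner_self_eq_norm_sq]
  rw [hfinal, Real.sqrt_sq (norm_nonneg _)]
  have := sup_abs_inner_unit h
  rw [← this]
  exact congrArg _ (funext fun g => by rw [hinner g.1])
end

section
/- If the kernel matrix K is symmetric positive definite, then for all u, u' ∈ X, (k(u,u) − 2k(u,u') + k(u',u')) − (k_N(u,u) − 2k_N(u,u') + k_N(u',u')) = (k(u,U) − k(u',U))^T K^{-1} (k(u,U) − k(u',U)) ≥ 0; in particular the second-order increments of the predictive covariance are dominated by those of the prior covariance: k_N(u,u) − 2k_N(u,u') + k_N(u',u') ≤ k(u,u) − 2k(u,u') + k(u',u'). -/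
open Matrix

/-- If the kernel matrix `K` is symmetric positive definite, then for all
`u, u' ∈ X`,
`(k(u,u) − 2k(u,u') + k(u',u')) − (k_N(u,u) − 2k_N(u,u') + k_N(u',u'))
  = (k(u,U) − k(u',U))ᵀ K⁻¹ (k(u,U) − k(u',U)) ≥ 0`;
in particular the second-order increments of the predictive covariance are dominated by
those of the prior covariance. -/
theorem predictive_covariance_increments_dominated
    {X : Type*} (k : X → X → ℝ)
    (hsym : ∀ u v : X, k u v = k v u)
    {N : ℕ} (U : Fin N → X) (hU : Function.Injective U)
    (K : Matrix (Fin N) (Fin N) ℝ) (hK : K = Matrix.of fun i j => k (U i) (U j))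
    (hKpd : K.PosDef)
    (kN : X → X → ℝ)
    (hkN : ∀ u u' : X,
      kN u u' = k u u' - (fun i => k u (U i)) ⬝ᵥ (K⁻¹ *ᵥ fun i => k u' (U i)))
    (u u' : X) :
    ((k u u - 2 * k u u' + k u' u') - (kN u u - 2 * kN u u' + kN u' u')
        = ((fun i => k u (U i)) - fun i => k u' (U i)) ⬝ᵥ
            (K⁻¹ *ᵥ ((fun i => k u (U i)) - fun i => k u' (U i))))
      ∧ 0 ≤ ((fun i => k u (U i)) - fun i => k u' (U i)) ⬝ᵥ
            (K⁻¹ *ᵥ ((fun i => k u (U i)) - fun i => k u' (U i)))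
      ∧ kN u u - 2 * kN u u' + kN u' u' ≤ k u u - 2 * k u u' + k u' u' := by
  set a : Fin N → ℝ := fun i => k u (U i) with ha
  set b : Fin N → ℝ := fun i => k u' (U i) with hb
  have hKsym : Kᵀ = K := by
    subst hK; ext i j; simp [Matrix.transpose_apply, hsym]
  have hKinvT : K⁻¹ᵀ = K⁻¹ := by
    rw [Matrix.transpose_nonsing_inv, hKsym]
  have hsymm : ∀ x y : Fin N → ℝ, x ⬝ᵥ (K⁻¹ *ᵥ y) = y ⬝ᵥ (K⁻¹ *ᵥ x) := by
    intro x y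
    rw [Matrix.dotProduct_mulVec, ← Matrix.mulVec_transpose, hKinvT,
      dotProduct_comm]
  have heq : (k u u - 2 * k u u' + k u' u') - (kN u u - 2 * kN u u' + kN u' u')
      = (a - b) ⬝ᵥ (K⁻¹ *ᵥ (a - b)) := by
    rw [hkN u u, hkN u u', hkN u' u', sub_dotProduct, Matrix.mulVec_sub,
      dotProduct_sub, dotProduct_sub, hsymm b a]
    ring
  have hpos : 0 ≤ (a - b) ⬝ᵥ (K⁻¹ *ᵥ (a - b)) := by
    have := hKpd.inv.posSemidef.dotProduct_mulVec_nonneg (a - b)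
    simpa using this
  exact ⟨heq, hpos, by linarith [heq ▸ hpos]⟩
end

section
/- For every B ≥ 0, ‖y‖, and σ > 0 there exists a constant C, depending only on B, ‖y‖ and σ, such that for all bounded measurable maps G, m : X → ℝ^J with sup_{u ∈ X} ‖G(u)‖ ≤ B and sup_{u ∈ X} ‖m(u)‖ ≤ B, the Hellinger distance between the posterior measures satisfies d_Hell(μ_G, μ_m) ≤ C (∫_X ‖G(u) − m(u)‖² dμ₀(u))^{1/2}. -/
open MeasureTheory

-- helper lemma tests
lemma exp_neg_lip {a b : ℝ} (ha : 0 ≤ a) (hb : 0 ≤ b) :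
    |Real.exp (-a) - Real.exp (-b)| ≤ |a - b| := by
  have key : ∀ s t : ℝ, 0 ≤ s → s ≤ t → Real.exp (-s) - Real.exp (-t) ≤ t - s := by
    intro s t hs hst
    have h1 := Real.add_one_le_exp (s - t)
    have h2 : Real.exp (-s) ≤ 1 := Real.exp_le_one_iff.mpr (by linarith)
    have h3 : Real.exp (-t) = Real.exp (-s) * Real.exp (s - t) := by
      rw [← Real.exp_add]; ring_nf
    nlinarith [Real.exp_pos (-s)]
  rcases le_total a b with h | h
  · have e : Real.exp (-b) ≤ Real.exp (-a) := Real.exp_le_exp.mpr (by linarith)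
    rw [abs_of_nonneg (by linarith), abs_of_nonpos (by linarith)]
    have := key a b ha h; linarith
  · have e : Real.exp (-a) ≤ Real.exp (-b) := Real.exp_le_exp.mpr (by linarith)
    rw [abs_of_nonpos (by linarith), abs_of_nonneg (by linarith)]
    have := key b a hb h; linarith

lemma add_sq_le_two (x z : ℝ) : (x + z) ^ 2 ≤ 2 * x ^ 2 + 2 * z ^ 2 := by
  nlinarith [sq_nonneg (x - z)]

lemma integrable_of_bdd {X : Type*} [MeasurableSpace X] {μ : Measure X} [IsFiniteMeasure μ]
    {f : X → ℝ} (hf : Measurable f) (M : ℝ) (h : ∀ u, |f u| ≤ M) : Integrable f μ :=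
  (integrable_const M).mono' hf.aestronglyMeasurable (ae_of_all _ (by simpa using h))

lemma integral_le_sqrt_sq {X : Type*} [MeasurableSpace X] {μ : Measure X} [IsProbabilityMeasure μ]
    {h : X → ℝ} (hm : Measurable h) (M : ℝ) (h0 : ∀ u, 0 ≤ h u) (hM : ∀ u, h u ≤ M) :
    ∫ u, h u ∂μ ≤ Real.sqrt (∫ u, (h u) ^ 2 ∂μ) := by
  have hint : Integrable h μ := integrable_of_bdd hm M (fun u => by
    rw [abs_of_nonneg (h0 u)]; exact hM u)
  have hint2 : Integrable (fun u => (h u) ^ 2) μ := integrable_of_bdd (hm.pow_const 2) (M^2)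
    (fun u => by rw [abs_of_nonneg (sq_nonneg _)]; exact pow_le_pow_left₀ (h0 u) (hM u) 2)
  set a := ∫ u, h u ∂μ with ha
  have ha0 : 0 ≤ a := integral_nonneg h0
  have hvar : 0 ≤ ∫ u, (h u - a) ^ 2 ∂μ := integral_nonneg (fun u => sq_nonneg _)
  have hexp : ∫ u, (h u - a) ^ 2 ∂μ = (∫ u, (h u) ^ 2 ∂μ) - a ^ 2 := by
    have : ∀ u, (h u - a) ^ 2 = (h u) ^ 2 - (2 * a) * h u + a ^ 2 := by intro u; ring
    have A : Integrable (fun u => h u ^ 2 - 2 * a * h u) μ := hint2.sub (hint.const_mul _)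
    rw [integral_congr_ae (ae_of_all _ this),
      integral_add A (integrable_const (a ^ 2)),
      integral_sub hint2 (hint.const_mul (2 * a)), integral_const_mul, integral_const]
    simp [← ha]; ring
  have : a ^ 2 ≤ ∫ u, (h u) ^ 2 ∂μ := by linarith
  calc a = Real.sqrt (a ^ 2) := (Real.sqrt_sq ha0).symm
    _ ≤ _ := Real.sqrt_le_sqrt this

set_option maxHeartbeats 2000000 in
/-- For every `B ≥ 0`, `‖y‖` and `σ > 0` there is a constant `C` such that for
all bounded measurable `G, m : X → ℝ^J` with `sup ‖G‖ ≤ B` and `sup ‖m‖ ≤ B`, the Hellinger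
distance between the corresponding posteriors satisfies
`d_Hell(μ_G, μ_m) ≤ C (∫_X ‖G(u) − m(u)‖² dμ₀(u))^{1/2}`.
The Hellinger distance is expressed via the densities
`dμ_F/dμ₀ = exp(−‖y − F(u)‖²/(2σ²))/Z_F`. -/
theorem hellinger_bound_mean_approx_vector
    {X : Type*} [MeasurableSpace X] (μ₀ : Measure X) [IsProbabilityMeasure μ₀]
    (J : ℕ) (y : EuclideanSpace ℝ (Fin J)) (σ : ℝ) (hσ : 0 < σ) (B : ℝ) (hB : 0 ≤ B) :
    ∃ C : ℝ, ∀ G m : X → EuclideanSpace ℝ (Fin J),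
      Measurable G → Measurable m →
      (∀ u : X, ‖G u‖ ≤ B) → (∀ u : X, ‖m u‖ ≤ B) →
      Real.sqrt ((1 / 2) * ∫ u,
          (Real.sqrt (Real.exp (-‖y - G u‖ ^ 2 / (2 * σ ^ 2)) /
              ∫ v, Real.exp (-‖y - G v‖ ^ 2 / (2 * σ ^ 2)) ∂μ₀) -
            Real.sqrt (Real.exp (-‖y - m u‖ ^ 2 / (2 * σ ^ 2)) /
              ∫ v, Real.exp (-‖y - m v‖ ^ 2 / (2 * σ ^ 2)) ∂μ₀)) ^ 2 ∂μ₀)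
        ≤ C * Real.sqrt (∫ u, ‖G u - m u‖ ^ 2 ∂μ₀) := by
  have hσ2 : (0:ℝ) < 2 * σ ^ 2 := by positivity
  set R : ℝ := ‖y‖ + B with hRdef
  have hR0 : 0 ≤ R := by positivity
  set c : ℝ := Real.exp (-R ^ 2 / (2 * σ ^ 2)) with hcdef
  have hc0 : 0 < c := Real.exp_pos _
  have hc1 : c ≤ 1 := Real.exp_le_one_iff.mpr
    (div_nonpos_of_nonpos_of_nonneg (neg_nonpos.mpr (sq_nonneg _)) hσ2.le)
  set K : ℝ := R / (2 * σ ^ 2) with hKdef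
  have hK0 : 0 ≤ K := by positivity
  refine ⟨Real.sqrt (2 * K ^ 2 / c ^ 3), ?_⟩
  intro G m hG hm hGB hmB
  -- facts about each density
  have fact : ∀ F : X → EuclideanSpace ℝ (Fin J), Measurable F → (∀ u, ‖F u‖ ≤ B) →
      Measurable (fun u => Real.exp (-‖y - F u‖ ^ 2 / (2 * σ ^ 2))) ∧
      Integrable (fun u => Real.exp (-‖y - F u‖ ^ 2 / (2 * σ ^ 2))) μ₀ ∧
      (∀ u, c ≤ Real.exp (-‖y - F u‖ ^ 2 / (2 * σ ^ 2)) ∧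
        Real.exp (-‖y - F u‖ ^ 2 / (2 * σ ^ 2)) ≤ 1) ∧
      c ≤ (∫ v, Real.exp (-‖y - F v‖ ^ 2 / (2 * σ ^ 2)) ∂μ₀) ∧
      (∫ v, Real.exp (-‖y - F v‖ ^ 2 / (2 * σ ^ 2)) ∂μ₀) ≤ 1 := by
    intro F hF hFB
    have hnorm : Measurable fun u => ‖y - F u‖ := (measurable_const.sub hF).norm
    have hmeas : Measurable fun u => Real.exp (-‖y - F u‖ ^ 2 / (2 * σ ^ 2)) :=
      (((hnorm.pow_const 2).neg.div_const _)).exp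
    have hbd : ∀ u, c ≤ Real.exp (-‖y - F u‖ ^ 2 / (2 * σ ^ 2)) ∧
        Real.exp (-‖y - F u‖ ^ 2 / (2 * σ ^ 2)) ≤ 1 := by
      intro u
      have h1 : ‖y - F u‖ ≤ R := le_trans (norm_sub_le _ _) (by
        have := hFB u; rw [hRdef]; linarith)
      constructor
      · apply Real.exp_le_exp.mpr
        apply (div_le_div_iff_of_pos_right hσ2).mpr
        have : ‖y - F u‖ ^ 2 ≤ R ^ 2 := pow_le_pow_left₀ (norm_nonneg _) h1 2
        linarith
      · exact Real.exp_le_one_iff.mpr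
          (div_nonpos_of_nonpos_of_nonneg (neg_nonpos.mpr (sq_nonneg _)) hσ2.le)
    have hint : Integrable (fun u => Real.exp (-‖y - F u‖ ^ 2 / (2 * σ ^ 2))) μ₀ :=
      integrable_of_bdd hmeas 1 (fun u => by
        rw [abs_of_nonneg (Real.exp_pos _).le]; exact (hbd u).2)
    refine ⟨hmeas, hint, hbd, ?_, ?_⟩
    · calc c = ∫ _, c ∂μ₀ := by simp
        _ ≤ _ := integral_mono (integrable_const c) hint (fun u => (hbd u).1)
    · calc (∫ v, Real.exp (-‖y - F v‖ ^ 2 / (2 * σ ^ 2)) ∂μ₀)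
          ≤ ∫ _, (1:ℝ) ∂μ₀ := integral_mono hint (integrable_const 1) (fun u => (hbd u).2)
        _ = 1 := by simp
  obtain ⟨hmG, hiG, hbG, hZGc, hZG1⟩ := fact G hG hGB
  obtain ⟨hmm, him, hbm, hZmc, hZm1⟩ := fact m hm hmB
  set ZG := ∫ v, Real.exp (-‖y - G v‖ ^ 2 / (2 * σ ^ 2)) ∂μ₀ with hZGdef
  set Zm := ∫ v, Real.exp (-‖y - m v‖ ^ 2 / (2 * σ ^ 2)) ∂μ₀ with hZmdef
  set I := ∫ u, ‖G u - m u‖ ^ 2 ∂μ₀ with hIdef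
  have hZG0 : 0 < ZG := lt_of_lt_of_le hc0 hZGc
  have hZm0 : 0 < Zm := lt_of_lt_of_le hc0 hZmc
  set D : ℝ := 1 / Real.sqrt ZG - 1 / Real.sqrt Zm with hDdef
  have hI0 : 0 ≤ I := integral_nonneg fun u => sq_nonneg _
  have hsqI : Real.sqrt I ^ 2 = I := Real.sq_sqrt hI0
  -- Lipschitz estimate for exp densities, general scale s
  have lips : ∀ (u : X) (s : ℝ), 0 < s →
      |Real.exp (-‖y - G u‖ ^ 2 / s) - Real.exp (-‖y - m u‖ ^ 2 / s)| ≤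
        (2 * R / s) * ‖G u - m u‖ := by
    intro u s hs
    have e1 : -‖y - G u‖ ^ 2 / s = -(‖y - G u‖ ^ 2 / s) := by ring
    have e2 : -‖y - m u‖ ^ 2 / s = -(‖y - m u‖ ^ 2 / s) := by ring
    rw [e1, e2]
    have h0 := exp_neg_lip (a := ‖y - G u‖ ^ 2 / s) (b := ‖y - m u‖ ^ 2 / s)
      (by positivity) (by positivity)
    refine h0.trans ?_
    rw [div_sub_div_same, abs_div, abs_of_pos hs]
    have hd : |‖y - G u‖ - ‖y - m u‖| ≤ ‖G u - m u‖ := by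
      have h2 := abs_norm_sub_norm_le (y - G u) (y - m u)
      have h3 : (y - G u) - (y - m u) = m u - G u := by abel
      rw [h3, norm_sub_rev (m u) (G u)] at h2; exact h2
    have hsum : ‖y - G u‖ + ‖y - m u‖ ≤ 2 * R := by
      have h4 := norm_sub_le y (G u)
      have h5 := norm_sub_le y (m u)
      have := hGB u; have := hmB u; rw [hRdef]; linarith
    have hnum : |‖y - G u‖ ^ 2 - ‖y - m u‖ ^ 2| ≤ ‖G u - m u‖ * (2 * R) := by
      have he : |‖y - G u‖ ^ 2 - ‖y - m u‖ ^ 2| =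
          |‖y - G u‖ - ‖y - m u‖| * (‖y - G u‖ + ‖y - m u‖) := by
        rw [← abs_of_nonneg (by positivity : (0:ℝ) ≤ ‖y - G u‖ + ‖y - m u‖), ← abs_mul]
        congr 1; ring
      rw [he]
      exact mul_le_mul hd hsum (by positivity) (norm_nonneg _)
    calc |‖y - G u‖ ^ 2 - ‖y - m u‖ ^ 2| / s ≤ (‖G u - m u‖ * (2 * R)) / s := by
          exact (div_le_div_iff_of_pos_right hs).mpr hnum
        _ = (2 * R / s) * ‖G u - m u‖ := by ring
  -- sqrt of densities Lipschitz
  have sqrt_exp_eq : ∀ t : ℝ, Real.sqrt (Real.exp t) = Real.exp (t / 2) := by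
    intro t
    have h : Real.exp t = Real.exp (t / 2) * Real.exp (t / 2) := by
      rw [← Real.exp_add]; ring_nf
    rw [h, Real.sqrt_mul_self (Real.exp_pos _).le]
  have hsl : ∀ u, |Real.sqrt (Real.exp (-‖y - G u‖ ^ 2 / (2 * σ ^ 2))) -
      Real.sqrt (Real.exp (-‖y - m u‖ ^ 2 / (2 * σ ^ 2)))| ≤ K * ‖G u - m u‖ := by
    intro u
    rw [sqrt_exp_eq, sqrt_exp_eq]
    have e1 : -‖y - G u‖ ^ 2 / (2 * σ ^ 2) / 2 = -‖y - G u‖ ^ 2 / (4 * σ ^ 2) := by ring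
    have e2 : -‖y - m u‖ ^ 2 / (2 * σ ^ 2) / 2 = -‖y - m u‖ ^ 2 / (4 * σ ^ 2) := by ring
    rw [e1, e2]
    have h := lips u (4 * σ ^ 2) (by positivity)
    have e3 : 2 * R / (4 * σ ^ 2) = K := by rw [hKdef]; ring
    rw [e3] at h
    exact h
  have hnormInt : Integrable (fun u => ‖G u - m u‖) μ₀ :=
    integrable_of_bdd (hG.sub hm).norm (2 * B) (fun u => by
      rw [abs_of_nonneg (norm_nonneg _)]
      exact (norm_sub_le _ _).trans (by have := hGB u; have := hmB u; linarith))
  have hsqInt : Integrable (fun u => ‖G u - m u‖ ^ 2) μ₀ :=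
    integrable_of_bdd ((hG.sub hm).norm.pow_const 2) ((2 * B) ^ 2) (fun u => by
      rw [abs_of_nonneg (sq_nonneg _)]
      refine pow_le_pow_left₀ (norm_nonneg _) ?_ 2
      exact (norm_sub_le _ _).trans (by have := hGB u; have := hmB u; linarith))
  have hZdiff : |ZG - Zm| ≤ 2 * K * Real.sqrt I := by
    have h1 : |ZG - Zm| ≤ ∫ u, |Real.exp (-‖y - G u‖ ^ 2 / (2 * σ ^ 2)) -
        Real.exp (-‖y - m u‖ ^ 2 / (2 * σ ^ 2))| ∂μ₀ := by
      rw [hZGdef, hZmdef, ← integral_sub hiG him]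
      simpa [Real.norm_eq_abs] using norm_integral_le_integral_norm
        (f := fun u => Real.exp (-‖y - G u‖ ^ 2 / (2 * σ ^ 2)) -
          Real.exp (-‖y - m u‖ ^ 2 / (2 * σ ^ 2))) (μ := μ₀)
    have h2 : (∫ u, |Real.exp (-‖y - G u‖ ^ 2 / (2 * σ ^ 2)) -
        Real.exp (-‖y - m u‖ ^ 2 / (2 * σ ^ 2))| ∂μ₀) ≤
        ∫ u, 2 * K * ‖G u - m u‖ ∂μ₀ := by
      refine integral_mono (hiG.sub him).abs (hnormInt.const_mul _) fun u => ?_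
      have h := lips u (2 * σ ^ 2) hσ2
      have e3 : 2 * R / (2 * σ ^ 2) = 2 * K := by rw [hKdef]; ring
      rw [e3] at h; exact h
    have h3 : ∫ u, 2 * K * ‖G u - m u‖ ∂μ₀ = 2 * K * ∫ u, ‖G u - m u‖ ∂μ₀ :=
      integral_const_mul _ _
    have h4 : (∫ u, ‖G u - m u‖ ∂μ₀) ≤ Real.sqrt I := by
      rw [hIdef]
      exact integral_le_sqrt_sq (hG.sub hm).norm (2 * B) (fun u => norm_nonneg _)
        (fun u => (norm_sub_le _ _).trans (by have := hGB u; have := hmB u; linarith))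
    calc |ZG - Zm| ≤ _ := h1
      _ ≤ _ := h2
      _ = 2 * K * ∫ u, ‖G u - m u‖ ∂μ₀ := h3
      _ ≤ 2 * K * Real.sqrt I := mul_le_mul_of_nonneg_left h4 (by positivity)
  -- bound on D
  have hsG : Real.sqrt c ≤ Real.sqrt ZG := Real.sqrt_le_sqrt hZGc
  have hsm : Real.sqrt c ≤ Real.sqrt Zm := Real.sqrt_le_sqrt hZmc
  have hsc0 : 0 < Real.sqrt c := Real.sqrt_pos.mpr hc0
  have hsG0 : 0 < Real.sqrt ZG := lt_of_lt_of_le hsc0 hsG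
  have hsm0 : 0 < Real.sqrt Zm := lt_of_lt_of_le hsc0 hsm
  have hsGsq : Real.sqrt ZG ^ 2 = ZG := Real.sq_sqrt hZG0.le
  have hsmsq : Real.sqrt Zm ^ 2 = Zm := Real.sq_sqrt hZm0.le
  have hscmul : Real.sqrt c * Real.sqrt c = c := Real.mul_self_sqrt hc0.le
  have hpos : 0 < Real.sqrt ZG * Real.sqrt Zm * (Real.sqrt ZG + Real.sqrt Zm) := by positivity
  have key : ∀ a b : ℝ, 0 < a → 0 < b →
      (1 / a - 1 / b) * (a * b * (a + b)) = b ^ 2 - a ^ 2 := by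
    intro a b ha hb; field_simp; ring
  have h5 : D * (Real.sqrt ZG * Real.sqrt Zm * (Real.sqrt ZG + Real.sqrt Zm)) = Zm - ZG := by
    rw [hDdef, key _ _ hsG0 hsm0, hsGsq, hsmsq]
  have h6 : |D| * (Real.sqrt ZG * Real.sqrt Zm * (Real.sqrt ZG + Real.sqrt Zm)) = |Zm - ZG| := by
    rw [← abs_of_pos hpos, ← abs_mul, h5]
  have hden : 2 * c * Real.sqrt c ≤
      Real.sqrt ZG * Real.sqrt Zm * (Real.sqrt ZG + Real.sqrt Zm) := by
    have p1 : Real.sqrt c * Real.sqrt c ≤ Real.sqrt ZG * Real.sqrt Zm :=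
      mul_le_mul hsG hsm hsc0.le hsG0.le
    have p2 : 2 * Real.sqrt c ≤ Real.sqrt ZG + Real.sqrt Zm := by linarith
    nlinarith [hsc0, hscmul]
  have hDabs : |D| ≤ |Zm - ZG| / (2 * c * Real.sqrt c) := by
    rw [le_div_iff₀ (by positivity)]
    calc |D| * (2 * c * Real.sqrt c)
        ≤ |D| * (Real.sqrt ZG * Real.sqrt Zm * (Real.sqrt ZG + Real.sqrt Zm)) :=
          mul_le_mul_of_nonneg_left hden (abs_nonneg _)
      _ = |Zm - ZG| := h6
  have hD2 : D ^ 2 ≤ K ^ 2 * I / c ^ 3 := by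
    have h7 : |Zm - ZG| ≤ 2 * K * Real.sqrt I := by rw [abs_sub_comm]; exact hZdiff
    have h8 : |D| ≤ (2 * K * Real.sqrt I) / (2 * c * Real.sqrt c) :=
      hDabs.trans ((div_le_div_iff_of_pos_right (by positivity)).mpr h7)
    have h9 : D ^ 2 ≤ ((2 * K * Real.sqrt I) / (2 * c * Real.sqrt c)) ^ 2 := by
      rw [← sq_abs]; exact pow_le_pow_left₀ (abs_nonneg _) h8 2
    have h10 : ((2 * K * Real.sqrt I) / (2 * c * Real.sqrt c)) ^ 2 = K ^ 2 * I / c ^ 3 := by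
      rw [div_pow, mul_pow, mul_pow, mul_pow, Real.sq_sqrt hI0, Real.sq_sqrt hc0.le]
      field_simp
    rw [h10] at h9; exact h9
  -- pointwise bound
  have hpt : ∀ u, (Real.sqrt (Real.exp (-‖y - G u‖ ^ 2 / (2 * σ ^ 2)) / ZG) -
      Real.sqrt (Real.exp (-‖y - m u‖ ^ 2 / (2 * σ ^ 2)) / Zm)) ^ 2 ≤
      (2 * K ^ 2 / c) * ‖G u - m u‖ ^ 2 +
        (2 * D ^ 2) * Real.exp (-‖y - m u‖ ^ 2 / (2 * σ ^ 2)) := by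
    intro u
    rw [Real.sqrt_div (Real.exp_pos _).le, Real.sqrt_div (Real.exp_pos _).le]
    set sa := Real.sqrt (Real.exp (-‖y - G u‖ ^ 2 / (2 * σ ^ 2))) with hsa
    set sb := Real.sqrt (Real.exp (-‖y - m u‖ ^ 2 / (2 * σ ^ 2))) with hsb
    have keyd : sa / Real.sqrt ZG - sb / Real.sqrt Zm =
        (sa - sb) / Real.sqrt ZG + sb * D := by rw [hDdef]; ring
    rw [keyd]
    have h1 : ((sa - sb) / Real.sqrt ZG) ^ 2 ≤ (K ^ 2 / c) * ‖G u - m u‖ ^ 2 := by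
      rw [div_pow, hsGsq]
      have habs := hsl u
      have h2 : (sa - sb) ^ 2 ≤ (K * ‖G u - m u‖) ^ 2 := by
        rw [← sq_abs]; exact pow_le_pow_left₀ (abs_nonneg _) habs 2
      calc (sa - sb) ^ 2 / ZG ≤ (K * ‖G u - m u‖) ^ 2 / c :=
            div_le_div₀ (by positivity) h2 hc0 hZGc
        _ = (K ^ 2 / c) * ‖G u - m u‖ ^ 2 := by ring
    have h2 : (sb * D) ^ 2 = Real.exp (-‖y - m u‖ ^ 2 / (2 * σ ^ 2)) * D ^ 2 := by
      rw [mul_pow, hsb, Real.sq_sqrt (Real.exp_pos _).le]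
    calc ((sa - sb) / Real.sqrt ZG + sb * D) ^ 2
        ≤ 2 * ((sa - sb) / Real.sqrt ZG) ^ 2 + 2 * (sb * D) ^ 2 := add_sq_le_two _ _
      _ ≤ (2 * K ^ 2 / c) * ‖G u - m u‖ ^ 2 +
          (2 * D ^ 2) * Real.exp (-‖y - m u‖ ^ 2 / (2 * σ ^ 2)) := by
          rw [h2]
          have e2 : 2 * (Real.exp (-‖y - m u‖ ^ 2 / (2 * σ ^ 2)) * D ^ 2) =
              2 * D ^ 2 * Real.exp (-‖y - m u‖ ^ 2 / (2 * σ ^ 2)) := by ring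
          have e3 : 2 * K ^ 2 / c * ‖G u - m u‖ ^ 2 =
              2 * (K ^ 2 / c * ‖G u - m u‖ ^ 2) := by ring
          rw [e2, e3]
          exact add_le_add (mul_le_mul_of_nonneg_left h1 (by norm_num)) le_rfl
  have hRHSint : Integrable (fun u => (2 * K ^ 2 / c) * ‖G u - m u‖ ^ 2 +
      (2 * D ^ 2) * Real.exp (-‖y - m u‖ ^ 2 / (2 * σ ^ 2))) μ₀ :=
    (hsqInt.const_mul _).add (him.const_mul _)
  have hS : (∫ u, (Real.sqrt (Real.exp (-‖y - G u‖ ^ 2 / (2 * σ ^ 2)) / ZG) -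
      Real.sqrt (Real.exp (-‖y - m u‖ ^ 2 / (2 * σ ^ 2)) / Zm)) ^ 2 ∂μ₀) ≤
      (2 * K ^ 2 / c) * I + (2 * D ^ 2) * Zm := by
    have h1 := integral_mono_of_nonneg (ae_of_all _ fun u => sq_nonneg _) hRHSint
      (ae_of_all _ hpt)
    refine h1.trans_eq ?_
    rw [integral_add (hsqInt.const_mul _) (him.const_mul _), integral_const_mul,
      integral_const_mul, ← hIdef, ← hZmdef]
  refine le_trans (Real.sqrt_le_sqrt ?_) (le_of_eq (Real.sqrt_mul (by positivity) I))
  have hcc : c ^ 3 ≤ c := by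
    have h0 : 0 ≤ c * ((1 - c) * (1 + c)) :=
      mul_nonneg hc0.le (mul_nonneg (by linarith) (by linarith))
    nlinarith only [h0]
  have h2 : K ^ 2 * I / c ≤ K ^ 2 * I / c ^ 3 := by
    rcases eq_or_lt_of_le (by positivity : (0:ℝ) ≤ K ^ 2 * I) with h | h
    · rw [← h]; simp
    · exact (div_le_div_iff_of_pos_left h hc0 (by positivity)).mpr hcc
  have h3 : (2 * D ^ 2) * Zm ≤ 2 * (K ^ 2 * I / c ^ 3) := by
    nlinarith only [hD2, hZm1, hZm0.le, sq_nonneg D]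
  clear_value D I Zm ZG K c R
  set S := ∫ u, (Real.sqrt (Real.exp (-‖y - G u‖ ^ 2 / (2 * σ ^ 2)) / ZG) -
      Real.sqrt (Real.exp (-‖y - m u‖ ^ 2 / (2 * σ ^ 2)) / Zm)) ^ 2 ∂μ₀ with hSdef
  clear_value S
  ring_nf at hS h2 h3 ⊢
  linarith only [hS, h2, h3]
end

section
/- For every B ≥ 0 there exists a constant C, depending only on B, such that for all bounded measurable functions Φ, Ψ : X → ℝ with sup_{u ∈ X} |Φ(u)| ≤ B and sup_{u ∈ X} |Ψ(u)| ≤ B, the Hellinger distance between the associated Gibbs measures satisfies d_Hell(μ_Φ, μ_Ψ) ≤ C (∫_X |Φ(u) − Ψ(u)|² dμ₀(u))^{1/2}. -/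
open MeasureTheory

private lemma expLip {M x y : ℝ} (hx : x ≤ M) (hy : y ≤ M) :
    |Real.exp x - Real.exp y| ≤ Real.exp M * |x - y| := by
  wlog h : y ≤ x generalizing x y
  · rw [abs_sub_comm, abs_sub_comm x y]; exact this hy hx (le_of_not_ge h)
  rw [abs_of_nonneg (sub_nonneg.2 (Real.exp_le_exp.2 h)), abs_of_nonneg (sub_nonneg.2 h)]
  have h1 : Real.exp y ≥ Real.exp x * (1 - (x - y)) := by
    have h2 := Real.add_one_le_exp (y - x)
    have he : Real.exp y = Real.exp x * Real.exp (y - x) := by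
      rw [← Real.exp_add]; ring_nf
    nlinarith [Real.exp_pos x]
  nlinarith [Real.exp_pos x, Real.exp_le_exp.2 hx]

private lemma sqrtLip {m x y : ℝ} (hm : 0 < m) (hx : m ≤ x) (hy : m ≤ y) :
    |Real.sqrt x - Real.sqrt y| ≤ |x - y| / Real.sqrt m := by
  have hsm : 0 < Real.sqrt m := Real.sqrt_pos.2 hm
  rw [le_div_iff₀ hsm]
  have key : |Real.sqrt x - Real.sqrt y| * (Real.sqrt x + Real.sqrt y) = |x - y| := by
    rw [← abs_of_nonneg (by positivity : (0:ℝ) ≤ Real.sqrt x + Real.sqrt y), ← abs_mul]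
    congr 1
    have := Real.sq_sqrt (hm.le.trans hx)
    have := Real.sq_sqrt (hm.le.trans hy)
    ring_nf
    nlinarith
  calc |Real.sqrt x - Real.sqrt y| * Real.sqrt m
      ≤ |Real.sqrt x - Real.sqrt y| * (Real.sqrt x + Real.sqrt y) := by
        apply mul_le_mul_of_nonneg_left _ (abs_nonneg _)
        have := Real.sqrt_le_sqrt hx
        have := Real.sqrt_nonneg y
        linarith
    _ = |x - y| := key

private lemma Zfacts {X : Type*} [MeasurableSpace X] (μ₀ : Measure X) [IsProbabilityMeasure μ₀]
    {B : ℝ} {f : X → ℝ} (hf : Measurable f) (hb : ∀ u, |f u| ≤ B) :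
    Integrable (fun u => Real.exp (-f u)) μ₀ ∧
    (Real.exp B)⁻¹ ≤ ∫ v, Real.exp (-f v) ∂μ₀ ∧
    (∫ v, Real.exp (-f v) ∂μ₀) ≤ Real.exp B := by
  have hub : ∀ u, Real.exp (-f u) ≤ Real.exp B := fun u =>
    Real.exp_le_exp.2 (by linarith [(abs_le.1 (hb u)).1])
  have hlb : ∀ u, (Real.exp B)⁻¹ ≤ Real.exp (-f u) := fun u => by
    rw [← Real.exp_neg]
    exact Real.exp_le_exp.2 (by linarith [(abs_le.1 (hb u)).2])
  have hint : Integrable (fun u => Real.exp (-f u)) μ₀ := by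
    apply (integrable_const (Real.exp B)).mono' (hf.neg.exp.aestronglyMeasurable)
    filter_upwards with u
    rw [Real.norm_eq_abs, abs_of_pos (Real.exp_pos _)]
    exact hub u
  refine ⟨hint, ?_, ?_⟩
  · calc (Real.exp B)⁻¹ = ∫ _v, (Real.exp B)⁻¹ ∂μ₀ := by simp
      _ ≤ _ := integral_mono (integrable_const _) hint hlb
  · calc (∫ v, Real.exp (-f v) ∂μ₀) ≤ ∫ _v, Real.exp B ∂μ₀ :=
        integral_mono hint (integrable_const _) hub
      _ = Real.exp B := by simp

set_option maxHeartbeats 1000000 in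
/-- For every `B ≥ 0` there is a constant `C` such that for all bounded
measurable `Φ, Ψ : X → ℝ` with `sup |Φ| ≤ B` and `sup |Ψ| ≤ B`, the Hellinger distance
between the associated Gibbs measures satisfies
`d_Hell(μ_Φ, μ_Ψ) ≤ C (∫_X |Φ(u) − Ψ(u)|² dμ₀(u))^{1/2}`.
The Hellinger distance is expressed via the densities `dμ_Ψ/dμ₀ = exp(−Ψ(u))/Z_Ψ`. -/
theorem hellinger_bound_mean_approx_scalar
    {X : Type*} [MeasurableSpace X] (μ₀ : Measure X) [IsProbabilityMeasure μ₀]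
    (B : ℝ) (hB : 0 ≤ B) :
    ∃ C : ℝ, ∀ Φ Ψ : X → ℝ,
      Measurable Φ → Measurable Ψ →
      (∀ u : X, |Φ u| ≤ B) → (∀ u : X, |Ψ u| ≤ B) →
      Real.sqrt ((1 / 2) * ∫ u,
          (Real.sqrt (Real.exp (-Φ u) / ∫ v, Real.exp (-Φ v) ∂μ₀) -
            Real.sqrt (Real.exp (-Ψ u) / ∫ v, Real.exp (-Ψ v) ∂μ₀)) ^ 2 ∂μ₀)
        ≤ C * Real.sqrt (∫ u, |Φ u - Ψ u| ^ 2 ∂μ₀) := by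
  set M := Real.exp B with hMdef
  have hM1 : 1 ≤ M := Real.one_le_exp hB
  have hM0 : 0 < M := lt_of_lt_of_le one_pos hM1
  have hMinv : 0 < M⁻¹ := inv_pos.2 hM0
  have hsM1 : 1 ≤ Real.sqrt M := by
    rw [show (1:ℝ) = Real.sqrt 1 by simp]; exact Real.sqrt_le_sqrt hM1
  have hsM0 : 0 < Real.sqrt M := lt_of_lt_of_le one_pos hsM1
  have hMs : Real.sqrt M * Real.sqrt M = M := Real.mul_self_sqrt hM0.le
  refine ⟨Real.sqrt 2 * M ^ 3, ?_⟩
  intro Φ Ψ hΦm hΨm hΦb hΨb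
  obtain ⟨intΦ, hZΦ1, hZΦ2⟩ := Zfacts μ₀ hΦm hΦb
  obtain ⟨intΨ, hZΨ1, hZΨ2⟩ := Zfacts μ₀ hΨm hΨb
  set ZΦ := ∫ v, Real.exp (-Φ v) ∂μ₀ with hZΦdef
  set ZΨ := ∫ v, Real.exp (-Ψ v) ∂μ₀ with hZΨdef
  set D := Real.sqrt (∫ u, |Φ u - Ψ u| ^ 2 ∂μ₀) with hDdef
  have hD0 : 0 ≤ D := Real.sqrt_nonneg _
  have hd2nonneg : 0 ≤ ∫ u, |Φ u - Ψ u| ^ 2 ∂μ₀ :=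
    integral_nonneg fun u => by positivity
  have hD2 : ∫ u, |Φ u - Ψ u| ^ 2 ∂μ₀ = D ^ 2 := (Real.sq_sqrt hd2nonneg).symm
  have hdbound : ∀ u, |Φ u - Ψ u| ≤ 2 * B := fun u => by
    have h1 := abs_le.1 (hΦb u); have h2 := abs_le.1 (hΨb u)
    exact abs_le.2 ⟨by linarith, by linarith⟩
  have hdmeas : Measurable fun u => |Φ u - Ψ u| := (hΦm.sub hΨm).abs
  have intd : Integrable (fun u => |Φ u - Ψ u|) μ₀ := by
    apply (integrable_const (2 * B)).mono' hdmeas.aestronglyMeasurable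
    filter_upwards with u
    rw [Real.norm_eq_abs, abs_abs]; exact hdbound u
  have intd2 : Integrable (fun u => |Φ u - Ψ u| ^ 2) μ₀ := by
    apply (integrable_const ((2 * B) ^ 2)).mono' (hdmeas.pow_const 2).aestronglyMeasurable
    filter_upwards with u
    rw [Real.norm_eq_abs, abs_of_nonneg (by positivity)]
    exact pow_le_pow_left₀ (abs_nonneg _) (hdbound u) 2
  -- Cauchy-Schwarz via variance
  have hintd : ∫ u, |Φ u - Ψ u| ∂μ₀ ≤ D := by
    have hmem : MemLp (fun u => |Φ u - Ψ u|) 2 μ₀ :=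
      MemLp.of_bound hdmeas.aestronglyMeasurable (2 * B)
        (Filter.Eventually.of_forall fun u => by
          rw [Real.norm_eq_abs, abs_abs]; exact hdbound u)
    have hvar := ProbabilityTheory.variance_nonneg (fun u => |Φ u - Ψ u|) μ₀
    rw [ProbabilityTheory.variance_eq_sub hmem] at hvar
    simp only [Pi.pow_apply] at hvar
    exact (Real.le_sqrt (integral_nonneg fun u => abs_nonneg _) hd2nonneg).2 (by linarith)
  -- pointwise exp bounds
  have hexp_ub : ∀ (f : X → ℝ), (∀ u, |f u| ≤ B) → ∀ u, Real.exp (-f u) ≤ M := fun f hb u =>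
    Real.exp_le_exp.2 (by linarith [(abs_le.1 (hb u)).1])
  have hexp_lb : ∀ (f : X → ℝ), (∀ u, |f u| ≤ B) → ∀ u, M⁻¹ ≤ Real.exp (-f u) := fun f hb u => by
    rw [hMdef, ← Real.exp_neg]
    exact Real.exp_le_exp.2 (by linarith [(abs_le.1 (hb u)).2])
  -- Z-difference bound
  have hZdiff : |ZΦ - ZΨ| ≤ M * D := by
    have hpt : ∀ u, |Real.exp (-Φ u) - Real.exp (-Ψ u)| ≤ M * |Φ u - Ψ u| := fun u => by
      have h := expLip (M := B) (x := -Φ u) (y := -Ψ u)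
        (by linarith [(abs_le.1 (hΦb u)).1]) (by linarith [(abs_le.1 (hΨb u)).1])
      calc |Real.exp (-Φ u) - Real.exp (-Ψ u)| ≤ Real.exp B * |(-Φ u) - (-Ψ u)| := h
        _ = M * |Φ u - Ψ u| := by rw [← hMdef, show (-Φ u) - (-Ψ u) = -(Φ u - Ψ u) by ring, abs_neg]
    calc |ZΦ - ZΨ| = |∫ u, (Real.exp (-Φ u) - Real.exp (-Ψ u)) ∂μ₀| := by
          rw [integral_sub intΦ intΨ]
      _ ≤ ∫ u, |Real.exp (-Φ u) - Real.exp (-Ψ u)| ∂μ₀ := by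
          simpa [Real.norm_eq_abs] using
            norm_integral_le_integral_norm (fun u => Real.exp (-Φ u) - Real.exp (-Ψ u)) (μ := μ₀)
      _ ≤ ∫ u, M * |Φ u - Ψ u| ∂μ₀ := integral_mono (intΦ.sub intΨ).abs (intd.const_mul M) hpt
      _ = M * ∫ u, |Φ u - Ψ u| ∂μ₀ := integral_const_mul M _
      _ ≤ M * D := mul_le_mul_of_nonneg_left hintd hM0.le
  -- pointwise bound on the difference of square-root densities
  have hpoint : ∀ u,
      |Real.sqrt (Real.exp (-Φ u) / ZΦ) - Real.sqrt (Real.exp (-Ψ u) / ZΨ)|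
        ≤ M ^ 3 * (|Φ u - Ψ u| + D) := by
    intro u
    set a := Real.exp (-Φ u) with hadef
    set b := Real.exp (-Ψ u) with hbdef
    have ha1 : M⁻¹ ≤ a := hexp_lb Φ hΦb u
    have ha2 : a ≤ M := hexp_ub Φ hΦb u
    have hb1 : M⁻¹ ≤ b := hexp_lb Ψ hΨb u
    have hb2 : b ≤ M := hexp_ub Ψ hΨb u
    have hab : |a - b| ≤ M * |Φ u - Ψ u| := by
      have h := expLip (M := B) (x := -Φ u) (y := -Ψ u)
        (by linarith [(abs_le.1 (hΦb u)).1]) (by linarith [(abs_le.1 (hΨb u)).1])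
      calc |a - b| ≤ Real.exp B * |(-Φ u) - (-Ψ u)| := h
        _ = M * |Φ u - Ψ u| := by rw [← hMdef, show (-Φ u) - (-Ψ u) = -(Φ u - Ψ u) by ring, abs_neg]
    have h0Φ : 0 < Real.sqrt ZΦ := Real.sqrt_pos.2 (lt_of_lt_of_le hMinv hZΦ1)
    have h0Ψ : 0 < Real.sqrt ZΨ := Real.sqrt_pos.2 (lt_of_lt_of_le hMinv hZΨ1)
    have hsMinv : Real.sqrt M⁻¹ = (Real.sqrt M)⁻¹ := Real.sqrt_inv M
    have hZΦs : (Real.sqrt M)⁻¹ ≤ Real.sqrt ZΦ := by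
      rw [← hsMinv]; exact Real.sqrt_le_sqrt hZΦ1
    have hZΨs : (Real.sqrt M)⁻¹ ≤ Real.sqrt ZΨ := by
      rw [← hsMinv]; exact Real.sqrt_le_sqrt hZΨ1
    have hinvΦ : (Real.sqrt ZΦ)⁻¹ ≤ Real.sqrt M := by
      have := inv_anti₀ (inv_pos.2 hsM0) hZΦs
      rwa [inv_inv] at this
    have hinvΨ : (Real.sqrt ZΨ)⁻¹ ≤ Real.sqrt M := by
      have := inv_anti₀ (inv_pos.2 hsM0) hZΨs
      rwa [inv_inv] at this
    have e1 : |Real.sqrt a - Real.sqrt b| ≤ |a - b| * Real.sqrt M := by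
      have := sqrtLip hMinv ha1 hb1
      rwa [hsMinv, div_eq_mul_inv, inv_inv] at this
    have e4 : |Real.sqrt ZΨ - Real.sqrt ZΦ| ≤ |ZΦ - ZΨ| * Real.sqrt M := by
      have := sqrtLip hMinv hZΨ1 hZΦ1
      rw [hsMinv, div_eq_mul_inv, inv_inv] at this
      rwa [abs_sub_comm ZΦ ZΨ]
    have e5 : Real.sqrt b ≤ Real.sqrt M := Real.sqrt_le_sqrt hb2
    rw [Real.sqrt_div (Real.exp_pos _).le, Real.sqrt_div (Real.exp_pos _).le]
    have key : Real.sqrt a / Real.sqrt ZΦ - Real.sqrt b / Real.sqrt ZΨ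
        = (Real.sqrt a - Real.sqrt b) * (Real.sqrt ZΦ)⁻¹
          + Real.sqrt b * ((Real.sqrt ZΨ - Real.sqrt ZΦ) * ((Real.sqrt ZΦ)⁻¹ * (Real.sqrt ZΨ)⁻¹)) := by
      field_simp
      ring
    rw [key]
    have hsb0 : 0 ≤ Real.sqrt b := Real.sqrt_nonneg b
    calc |(Real.sqrt a - Real.sqrt b) * (Real.sqrt ZΦ)⁻¹
          + Real.sqrt b * ((Real.sqrt ZΨ - Real.sqrt ZΦ) * ((Real.sqrt ZΦ)⁻¹ * (Real.sqrt ZΨ)⁻¹))|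
        ≤ |Real.sqrt a - Real.sqrt b| * (Real.sqrt ZΦ)⁻¹
          + Real.sqrt b * (|Real.sqrt ZΨ - Real.sqrt ZΦ| * ((Real.sqrt ZΦ)⁻¹ * (Real.sqrt ZΨ)⁻¹)) := by
          calc _ ≤ |(Real.sqrt a - Real.sqrt b) * (Real.sqrt ZΦ)⁻¹|
              + |Real.sqrt b * ((Real.sqrt ZΨ - Real.sqrt ZΦ) * ((Real.sqrt ZΦ)⁻¹ * (Real.sqrt ZΨ)⁻¹))| :=
              abs_add_le _ _
            _ = _ := by
              rw [abs_mul, abs_mul, abs_mul, abs_mul, abs_inv, abs_inv,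
                abs_of_pos h0Φ, abs_of_pos h0Ψ, abs_of_nonneg hsb0]
      _ ≤ (M * |Φ u - Ψ u| * Real.sqrt M) * Real.sqrt M
          + Real.sqrt M * ((M * D * Real.sqrt M) * (Real.sqrt M * Real.sqrt M)) := by
          have e1' : |Real.sqrt a - Real.sqrt b| ≤ M * |Φ u - Ψ u| * Real.sqrt M :=
            e1.trans (mul_le_mul_of_nonneg_right hab hsM0.le)
          have e4' : |Real.sqrt ZΨ - Real.sqrt ZΦ| ≤ M * D * Real.sqrt M :=
            e4.trans (mul_le_mul_of_nonneg_right hZdiff hsM0.le)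
          have t1 : |Real.sqrt a - Real.sqrt b| * (Real.sqrt ZΦ)⁻¹
              ≤ (M * |Φ u - Ψ u| * Real.sqrt M) * Real.sqrt M :=
            mul_le_mul e1' hinvΦ (by positivity) (by positivity)
          have hinner : (Real.sqrt ZΦ)⁻¹ * (Real.sqrt ZΨ)⁻¹ ≤ Real.sqrt M * Real.sqrt M :=
            mul_le_mul hinvΦ hinvΨ (by positivity) hsM0.le
          have t2inner : |Real.sqrt ZΨ - Real.sqrt ZΦ| * ((Real.sqrt ZΦ)⁻¹ * (Real.sqrt ZΨ)⁻¹)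
              ≤ (M * D * Real.sqrt M) * (Real.sqrt M * Real.sqrt M) :=
            mul_le_mul e4' hinner (by positivity) (by positivity)
          have t2 : Real.sqrt b * (|Real.sqrt ZΨ - Real.sqrt ZΦ| * ((Real.sqrt ZΦ)⁻¹ * (Real.sqrt ZΨ)⁻¹))
              ≤ Real.sqrt M * ((M * D * Real.sqrt M) * (Real.sqrt M * Real.sqrt M)) :=
            mul_le_mul e5 t2inner (by positivity) hsM0.le
          exact add_le_add t1 t2
      _ = M ^ 2 * |Φ u - Ψ u| + M ^ 3 * D := by
          linear_combination (M * |Φ u - Ψ u| + M * D * (Real.sqrt M * Real.sqrt M + M)) * hMs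
      _ ≤ M ^ 3 * (|Φ u - Ψ u| + D) := by
          have hMM : M ^ 2 ≤ M ^ 3 := by nlinarith
          have hh := mul_le_mul_of_nonneg_right hMM (abs_nonneg (Φ u - Ψ u))
          nlinarith
  -- integrability of the squared difference of root-densities
  have hfmeas : Measurable fun u =>
      Real.sqrt (Real.exp (-Φ u) / ZΦ) - Real.sqrt (Real.exp (-Ψ u) / ZΨ) :=
    (Real.continuous_sqrt.measurable.comp (hΦm.neg.exp.div_const ZΦ)).sub
      (Real.continuous_sqrt.measurable.comp (hΨm.neg.exp.div_const ZΨ))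
  have hf2int : Integrable (fun u =>
      (Real.sqrt (Real.exp (-Φ u) / ZΦ) - Real.sqrt (Real.exp (-Ψ u) / ZΨ)) ^ 2) μ₀ := by
    apply (integrable_const ((2 * M) ^ 2)).mono' (hfmeas.pow_const 2).aestronglyMeasurable
    filter_upwards with u
    rw [Real.norm_eq_abs, abs_of_nonneg (sq_nonneg _), ← sq_abs]
    apply pow_le_pow_left₀ (abs_nonneg _)
    have hbd : ∀ (f : X → ℝ) (hb : ∀ u, |f u| ≤ B) (Z : ℝ) (hZ1 : M⁻¹ ≤ Z),
        Real.sqrt (Real.exp (-f u) / Z) ≤ M := by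
      intro f hb Z hZ1
      have h1 : Real.exp (-f u) / Z ≤ M * M := by
        rw [div_le_iff₀ (lt_of_lt_of_le hMinv hZ1)]
        calc Real.exp (-f u) ≤ M := hexp_ub f hb u
          _ = M * M * M⁻¹ := by field_simp
          _ ≤ M * M * Z := by
              have : (0:ℝ) ≤ M * M := by positivity
              exact mul_le_mul_of_nonneg_left hZ1 this
      calc Real.sqrt (Real.exp (-f u) / Z) ≤ Real.sqrt (M * M) := Real.sqrt_le_sqrt h1
        _ = M := Real.sqrt_mul_self hM0.le
    have h1 := hbd Φ hΦb ZΦ hZΦ1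
    have h2 := hbd Ψ hΨb ZΨ hZΨ1
    have h3 : (0:ℝ) ≤ Real.sqrt (Real.exp (-Φ u) / ZΦ) := Real.sqrt_nonneg _
    have h4 : (0:ℝ) ≤ Real.sqrt (Real.exp (-Ψ u) / ZΨ) := Real.sqrt_nonneg _
    rw [abs_le]; constructor <;> linarith
  have hgint : Integrable (fun u => (M ^ 3 * (|Φ u - Ψ u| + D)) ^ 2) μ₀ := by
    apply (integrable_const ((M ^ 3 * (2 * B + D)) ^ 2)).mono'
      (((hdmeas.add_const D).const_mul (M ^ 3)).pow_const 2).aestronglyMeasurable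
    filter_upwards with u
    rw [Real.norm_eq_abs, abs_of_nonneg (sq_nonneg _)]
    have h1 := hdbound u
    have h0 := abs_nonneg (Φ u - Ψ u)
    have h2 : |Φ u - Ψ u| + D ≤ 2 * B + D := by linarith
    have h3 : M ^ 3 * (|Φ u - Ψ u| + D) ≤ M ^ 3 * (2 * B + D) :=
      mul_le_mul_of_nonneg_left h2 (by positivity)
    exact pow_le_pow_left₀ (by positivity) h3 2
  have hmono : (∫ u, (Real.sqrt (Real.exp (-Φ u) / ZΦ) - Real.sqrt (Real.exp (-Ψ u) / ZΨ)) ^ 2 ∂μ₀)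
      ≤ ∫ u, (M ^ 3 * (|Φ u - Ψ u| + D)) ^ 2 ∂μ₀ := by
    apply integral_mono hf2int hgint
    intro u
    dsimp only
    rw [← sq_abs]
    exact pow_le_pow_left₀ (abs_nonneg _) (hpoint u) 2
  have hgval : (∫ u, (M ^ 3 * (|Φ u - Ψ u| + D)) ^ 2 ∂μ₀) ≤ 4 * M ^ 6 * D ^ 2 := by
    have hstep : (∫ u, (M ^ 3 * (|Φ u - Ψ u| + D)) ^ 2 ∂μ₀)
        ≤ ∫ u, ((2 * M ^ 6) * |Φ u - Ψ u| ^ 2 + (2 * M ^ 6) * D ^ 2) ∂μ₀ := by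
      apply integral_mono hgint ((intd2.const_mul _).add (integrable_const _))
      intro u
      simp only [Pi.add_apply]
      have h0 := abs_nonneg (Φ u - Ψ u)
      nlinarith [mul_nonneg (pow_nonneg hM0.le 6) (sq_nonneg (|Φ u - Ψ u| - D))]
    calc (∫ u, (M ^ 3 * (|Φ u - Ψ u| + D)) ^ 2 ∂μ₀)
        ≤ ∫ u, ((2 * M ^ 6) * |Φ u - Ψ u| ^ 2 + (2 * M ^ 6) * D ^ 2) ∂μ₀ := hstep
      _ = (2 * M ^ 6) * (∫ u, |Φ u - Ψ u| ^ 2 ∂μ₀) + (2 * M ^ 6) * D ^ 2 := by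
          rw [integral_add (intd2.const_mul _) (integrable_const _), integral_const_mul,
            integral_const]
          simp
      _ = 4 * M ^ 6 * D ^ 2 := by rw [hD2]; ring
  calc Real.sqrt ((1 / 2) * ∫ u,
        (Real.sqrt (Real.exp (-Φ u) / ZΦ) - Real.sqrt (Real.exp (-Ψ u) / ZΨ)) ^ 2 ∂μ₀)
      ≤ Real.sqrt ((1 / 2) * (4 * M ^ 6 * D ^ 2)) := by
        apply Real.sqrt_le_sqrt
        have := hmono.trans hgval
        linarith
    _ = Real.sqrt 2 * M ^ 3 * D := by
        rw [show (1 / 2 : ℝ) * (4 * M ^ 6 * D ^ 2) = (Real.sqrt 2 * M ^ 3 * D) ^ 2 by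
          rw [mul_pow, mul_pow, Real.sq_sqrt (by norm_num : (2:ℝ) ≥ 0)]; ring]
        exact Real.sqrt_sq (by positivity)
end

section
/- Let h₁, h₂ : X → [0,∞) be measurable functions with 0 < Z_i = ∫_X h_i dμ₀ < ∞ for i = 1,2, and let μ_i be the probability measures with densities dμ_i/dμ₀ = h_i/Z_i. Then 2 d_Hell(μ₁, μ₂)² ≤ (2/Z₁) ∫_X ( √(h₁(u)) − √(h₂(u)) )² dμ₀(u) + 2 Z₂ ( Z₁^{−1/2} − Z₂^{−1/2} )². -/
open MeasureTheory

/-- For measurable `h₁, h₂ : X → [0,∞)` with `0 < Z_i = ∫ h_i dμ₀ < ∞`, the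
probability measures `μ_i` with densities `h_i/Z_i` satisfy
`2 d_Hell(μ₁,μ₂)² ≤ (2/Z₁) ∫ (√h₁ − √h₂)² dμ₀ + 2 Z₂ (Z₁^{−1/2} − Z₂^{−1/2})²`.
Here `2 d_Hell(μ₁,μ₂)² = ∫ (√(h₁/Z₁) − √(h₂/Z₂))² dμ₀`. -/
theorem hellinger_splitting_bound
    {X : Type*} [MeasurableSpace X] (μ₀ : Measure X) [IsProbabilityMeasure μ₀]
    (h₁ h₂ : X → ℝ)
    (hm₁ : Measurable h₁) (hm₂ : Measurable h₂)
    (hpos₁ : ∀ u : X, 0 ≤ h₁ u) (hpos₂ : ∀ u : X, 0 ≤ h₂ u)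
    (hint₁ : Integrable h₁ μ₀) (hint₂ : Integrable h₂ μ₀)
    (Z₁ Z₂ : ℝ) (hZ₁ : Z₁ = ∫ u, h₁ u ∂μ₀) (hZ₂ : Z₂ = ∫ u, h₂ u ∂μ₀)
    (hZ₁pos : 0 < Z₁) (hZ₂pos : 0 < Z₂) :
    (∫ u, (Real.sqrt (h₁ u / Z₁) - Real.sqrt (h₂ u / Z₂)) ^ 2 ∂μ₀)
      ≤ (2 / Z₁) * (∫ u, (Real.sqrt (h₁ u) - Real.sqrt (h₂ u)) ^ 2 ∂μ₀)
        + 2 * Z₂ * ((Real.sqrt Z₁)⁻¹ - (Real.sqrt Z₂)⁻¹) ^ 2 := by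
  set c : ℝ := ((Real.sqrt Z₁)⁻¹ - (Real.sqrt Z₂)⁻¹) ^ 2 with hc
  -- integrability of (√h₁ - √h₂)²
  have I1 : Integrable (fun u => (Real.sqrt (h₁ u) - Real.sqrt (h₂ u)) ^ 2) μ₀ := by
    refine (hint₁.add hint₂).mono' ?_ ?_
    · exact ((hm₁.sqrt.sub hm₂.sqrt).pow_const 2).aestronglyMeasurable
    · refine Filter.Eventually.of_forall fun u => ?_
      have e1 := Real.sq_sqrt (hpos₁ u)
      have e2 := Real.sq_sqrt (hpos₂ u)
      have n1 := Real.sqrt_nonneg (h₁ u)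
      have n2 := Real.sqrt_nonneg (h₂ u)
      rw [Real.norm_eq_abs, abs_of_nonneg (sq_nonneg _), Pi.add_apply]
      nlinarith
  have Ig : Integrable
      (fun u => (2 / Z₁) * (Real.sqrt (h₁ u) - Real.sqrt (h₂ u)) ^ 2 + 2 * c * h₂ u) μ₀ :=
    (I1.const_mul _).add (hint₂.const_mul _)
  have hmono : (∫ u, (Real.sqrt (h₁ u / Z₁) - Real.sqrt (h₂ u / Z₂)) ^ 2 ∂μ₀)
      ≤ ∫ u, (2 / Z₁) * (Real.sqrt (h₁ u) - Real.sqrt (h₂ u)) ^ 2 + 2 * c * h₂ u ∂μ₀ := by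
    refine integral_mono_of_nonneg (Filter.Eventually.of_forall fun u => sq_nonneg _) Ig
      (Filter.Eventually.of_forall fun u => ?_)
    have hd1 : Real.sqrt (h₁ u / Z₁) = Real.sqrt (h₁ u) / Real.sqrt Z₁ :=
      Real.sqrt_div (hpos₁ u) _
    have hd2 : Real.sqrt (h₂ u / Z₂) = Real.sqrt (h₂ u) / Real.sqrt Z₂ :=
      Real.sqrt_div (hpos₂ u) _
    have sZ₁ : Real.sqrt Z₁ > 0 := Real.sqrt_pos.mpr hZ₁pos
    have sZ₂ : Real.sqrt Z₂ > 0 := Real.sqrt_pos.mpr hZ₂pos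
    have eZ₁ : Real.sqrt Z₁ ^ 2 = Z₁ := Real.sq_sqrt hZ₁pos.le
    have eZ₂ : Real.sqrt Z₂ ^ 2 = Z₂ := Real.sq_sqrt hZ₂pos.le
    have e2 := Real.sq_sqrt (hpos₂ u)
    dsimp only
    set a := Real.sqrt (h₁ u)
    set b := Real.sqrt (h₂ u)
    rw [hd1, hd2, hc]
    -- key: a/√Z₁ - b/√Z₂ = (a-b)/√Z₁ + b*(1/√Z₁ - 1/√Z₂)
    have key : a / Real.sqrt Z₁ - b / Real.sqrt Z₂
        = (a - b) / Real.sqrt Z₁ + b * ((Real.sqrt Z₁)⁻¹ - (Real.sqrt Z₂)⁻¹) := by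
      field_simp
      ring
    rw [key]
    have h2A : ∀ A B : ℝ, (A + B) ^ 2 ≤ 2 * A ^ 2 + 2 * B ^ 2 := by
      intro A B; nlinarith [sq_nonneg (A - B)]
    calc ((a - b) / Real.sqrt Z₁ + b * ((Real.sqrt Z₁)⁻¹ - (Real.sqrt Z₂)⁻¹)) ^ 2
        ≤ 2 * ((a - b) / Real.sqrt Z₁) ^ 2
          + 2 * (b * ((Real.sqrt Z₁)⁻¹ - (Real.sqrt Z₂)⁻¹)) ^ 2 := h2A _ _
      _ = 2 / Z₁ * (a - b) ^ 2
          + 2 * ((Real.sqrt Z₁)⁻¹ - (Real.sqrt Z₂)⁻¹) ^ 2 * h₂ u := by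
          rw [div_pow, mul_pow, eZ₁, ← e2]; ring
  refine hmono.trans ?_
  rw [integral_add (I1.const_mul _) (hint₂.const_mul _), integral_const_mul,
    integral_const_mul, ← hZ₂]
  exact le_of_eq (by ring)
end
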